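/- With b ≠ 0 and v̂ = b^{−1}c^θ − a^θ b^{θ−1} + a^{2θ+3}b^{−1} − c − ab, û = b − a^{θ+1} + b^{−θ}c² + a²b^{2−θ} + a^{2θ+4}b^{−θ} + ab^{1−θ}c − a^{θ+2}b^{−θ}c + a^{θ+3}b^{1−θ}, the identity w = b·û^θ − v̂·(v̂ − c) holds, where w = N(a,b,c) = −ac^θ + a^{θ+1}b^θ − a^{θ+3}b − a²b² + b^{θ+1} + c² − a^{2θ+4}. -/

import Mathlib

/-- The identity `w = b·û^θ − v̂·(v̂ − c)`. -/
theorem stmt16 {K : Type*} [Field K] [CharP K 3] (θ : K →+* K)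
    (hθ : ∀ x : K, θ (θ x) = x ^ 3) (a b c vh uh w : K) (hb : b ≠ 0)
    (hvh : vh = b⁻¹ * θ c - θ a * (θ b * b⁻¹) + (θ a) ^ 2 * a ^ 3 * b⁻¹ - c - a * b)
    (huh : uh = b - θ a * a + (θ b)⁻¹ * c ^ 2 + a ^ 2 * (b ^ 2 * (θ b)⁻¹)
      + (θ a) ^ 2 * a ^ 4 * (θ b)⁻¹ + a * (b * (θ b)⁻¹) * c
      - θ a * a ^ 2 * (θ b)⁻¹ * c + θ a * a ^ 3 * (b * (θ b)⁻¹))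
    (hw : w = -a * θ c + θ a * a * θ b - θ a * a ^ 3 * b - a ^ 2 * b ^ 2 + θ b * b
      + c ^ 2 - (θ a) ^ 2 * a ^ 4) :
    w = b * θ uh - vh * (vh - c) := by
  have h3 : (3 : K) = 0 := CharP.cast_eq_zero K 3
  subst hvh huh hw
  simp only [map_sub, map_add, map_mul, map_pow, map_inv₀, hθ]
  field_simp
  linear_combination (-(a * θ c * b ^ 5) + a * θ a * θ b * b ^ 5 - a ^ 4 * θ a ^ 2 * b ^ 5
    + b ^ 5 * c ^ 2 + a * b ^ 6 * c + a ^ 3 * θ c * θ a ^ 2 * b ^ 3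
    - a ^ 3 * θ a ^ 2 * b ^ 4 * c - a ^ 3 * θ a ^ 3 * θ b * b ^ 3
    - θ c * θ a * θ b * b ^ 3 - θ c * b ^ 4 * c + θ a * θ b * b ^ 4 * c
    + (-(b * a ^ 3 * θ a ^ 2 * c) - b * θ c * c + b * θ a * θ b * c - b ^ 2 * a * θ c
      + b ^ 2 * a * θ a * θ b - b ^ 2 * a ^ 4 * θ a ^ 2 + b ^ 2 * c ^ 2 + b ^ 3 * a * c
      - b ^ 3 * a ^ 3 * θ c * θ a ^ 2 + b ^ 3 * a ^ 3 * θ a ^ 3 * θ b + b ^ 3 * θ c * θ a * θ b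
      + b ^ 4 * a ^ 3 * θ a ^ 2 * c + b ^ 4 * θ c * c - b ^ 4 * θ a * θ b * c
      + b ^ 5 * a * θ c - b ^ 5 * a * θ a * θ b + b ^ 5 * a ^ 4 * θ a ^ 2 - b ^ 5 * c ^ 2
      - b ^ 6 * a * c + a ^ 3 * θ c * θ a ^ 2 - a ^ 3 * θ a ^ 3 * θ b - θ c * θ a * θ b)) * h3
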